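/- Let h(x) = λ(1/(1−x₃²) + a³x₁²/2 + b³x₂²/2) and g(x) = λ(¼(2abx₃ + b³x₂² − a³x₁²)² + a³b³x₁²x₂²)^{1/2}, where a = 1/(1+x₃), b = 1/(1−x₃), λ > 0. Then the matrix 2f'(h(0))·D²h(0) + f''(h(0))·D²(g²)(0), where f(s) = arctan(s), is diagonal with (1,1)- and (2,2)-entries 2λ/(1+λ²) and (3,3)-entry 4λ/(1+λ²) − 4λ³/(1+λ²)², and this matrix restricted to the (x₁,x₂,x₃) variables is positive definite for every λ > 0. -/

import Mathlib

open Real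

set_option maxHeartbeats 1600000

/-- Second derivatives at the origin, defined along coordinate two-planes. -/
noncomputable def secondPartial (F : (Fin 3 → ℝ) → ℝ) (i j : Fin 3) : ℝ :=
  deriv (fun s : ℝ =>
    deriv (fun t : ℝ => F (s • (Pi.single i 1 : Fin 3 → ℝ) + t • (Pi.single j 1 : Fin 3 → ℝ))) 0) 0

lemma sqrt_sq_eq' (l a b : ℝ) (hab : a = b) (hb : 0 ≤ b) : (l * Real.sqrt a)^2 = l^2 * b := by
  rw [mul_pow, hab, Real.sq_sqrt hb]

lemma coordL (i j k : Fin 3) (s t : ℝ) :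
    (s • (Pi.single i 1 : Fin 3 → ℝ) + t • (Pi.single j 1 : Fin 3 → ℝ)) k
      = s * (if k = i then 1 else 0) + t * (if k = j then 1 else 0) := by
  simp [Pi.single_apply]

lemma hdP' (c : ℝ) (hc : (1:ℝ) + c ≠ 0) :
    HasDerivAt (fun t : ℝ => 1/(1+t)) (-(1/(1+c)^2)) c := by
  have h1 : HasDerivAt (fun t : ℝ => 1 + t) 1 c := by simpa using (hasDerivAt_id c).const_add 1
  have := h1.inv hc
  simp only [one_div]
  refine HasDerivAt.congr_deriv (this) ?_
  ring

lemma hdQ' (c : ℝ) (hc : (1:ℝ) - c ≠ 0) :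
    HasDerivAt (fun t : ℝ => 1/(1-t)) (1/(1-c)^2) c := by
  have h1 : HasDerivAt (fun t : ℝ => 1 - t) (-1) c := by simpa using (hasDerivAt_id c).const_sub 1
  have := h1.inv hc
  simp only [one_div]
  refine HasDerivAt.congr_deriv (this) ?_
  ring

lemma hdR' (c : ℝ) (hc : (1:ℝ) - c^2 ≠ 0) :
    HasDerivAt (fun t : ℝ => 1/(1-t^2)) (2*c/(1-c^2)^2) c := by
  have := ((hasDerivAt_pow 2 c).const_sub 1).inv hc
  simp only [one_div]
  refine HasDerivAt.congr_deriv (this) ?_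
  push_cast; ring

lemma shiftD' {φ : ℝ → ℝ} {v s : ℝ} (H : HasDerivAt φ v s) :
    HasDerivAt (fun t : ℝ => φ (s + t)) v 0 := by
  have h1 : HasDerivAt (fun t : ℝ => s + t) 1 0 := by
    simpa using (hasDerivAt_id (0:ℝ)).const_add s
  have H' : HasDerivAt φ v (s + 0) := by simpa using H
  have H3 := H'.comp 0 h1
  rw [mul_one] at H3
  exact H3

lemma deriv_quad' (a : ℝ) : deriv (fun s : ℝ => a * s ^ 2) 0 = 0 := by
  simpa using ((hasDerivAt_pow 2 (0:ℝ)).const_mul a).deriv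

lemma deriv_cubic' (a : ℝ) : deriv (fun s : ℝ => a * s ^ 3) 0 = 0 := by
  simpa using ((hasDerivAt_pow 3 (0:ℝ)).const_mul a).deriv

lemma deriv_quart' (a b : ℝ) : deriv (fun s : ℝ => a * s ^ 2 + b * s ^ 4) 0 = 0 := by
  have H := (((hasDerivAt_pow 2 (0:ℝ)).const_mul a).add
    ((hasDerivAt_pow 4 (0:ℝ)).const_mul b)).deriv
  simp at H
  exact H

/-- Core computation of Lemma 5.1: with `f = arctan`, the matrix
`2f'(h(0))·D²h(0) + f''(h(0))·D²(g²)(0)` is diagonal with entries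
`(2λ/(1+λ²), 2λ/(1+λ²), 4λ/(1+λ²) - 4λ³/(1+λ²)²)`, and is positive definite
for every `λ > 0`. -/
theorem stmt15 (l : ℝ) (hl : 0 < l)
    (h g : (Fin 3 → ℝ) → ℝ)
    (hh : ∀ x, h x = l * (1 / (1 - (x 2) ^ 2) +
      (1 / (1 + x 2)) ^ 3 * (x 0) ^ 2 / 2 + (1 / (1 - x 2)) ^ 3 * (x 1) ^ 2 / 2))
    (hgdef : ∀ x, g x = l * Real.sqrt ((1 / 4) *
      (2 * (1 / (1 + x 2)) * (1 / (1 - x 2)) * x 2 +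
        ((1 / (1 - x 2)) ^ 3 * (x 1) ^ 2 - (1 / (1 + x 2)) ^ 3 * (x 0) ^ 2)) ^ 2 +
      (1 / (1 + x 2)) ^ 3 * (1 / (1 - x 2)) ^ 3 * (x 0) ^ 2 * (x 1) ^ 2)) :
    (Matrix.of fun i j : Fin 3 =>
        2 * deriv Real.arctan (h 0) * secondPartial h i j +
          deriv (deriv Real.arctan) (h 0) * secondPartial (fun x => (g x) ^ 2) i j) =
      Matrix.diagonal
        ![2 * l / (1 + l ^ 2), 2 * l / (1 + l ^ 2),
          4 * l / (1 + l ^ 2) - 4 * l ^ 3 / (1 + l ^ 2) ^ 2] ∧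
    (Matrix.of fun i j : Fin 3 =>
        2 * deriv Real.arctan (h 0) * secondPartial h i j +
          deriv (deriv Real.arctan) (h 0) *
            secondPartial (fun x => (g x) ^ 2) i j).PosDef := by
  have hl2 : (0:ℝ) < 1 + l^2 := by positivity
  have h0 : h 0 = l := by rw [hh]; norm_num
  have hda : deriv Real.arctan (h 0) = 1/(1+l^2) := by
    rw [h0, Real.deriv_arctan]
  have hdda : deriv (deriv Real.arctan) (h 0) = -(2*l)/(1+l^2)^2 := by
    rw [h0, Real.deriv_arctan]
    have H : HasDerivAt (fun x : ℝ => 1/(1+x^2)) (-(2*l)/(1+l^2)^2) l := by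
      have := ((hasDerivAt_pow 2 l).const_add 1).inv (by positivity)
      simp only [one_div]
      refine HasDerivAt.congr_deriv (this) ?_
      push_cast; ring
    exact H.deriv
  have sph00 : secondPartial h 0 0 = l := by
    unfold secondPartial
    have e : ∀ s t : ℝ, h (s • (Pi.single 0 1 : Fin 3 → ℝ) + t • (Pi.single 0 1 : Fin 3 → ℝ))
        = l * (1 + (s+t)^2/2) := by
      intro s t; rw [hh]; congr 1
      simp only [coordL]
      norm_num [Fin.ext_iff]
      try ring
    simp only [e]
    have inner : ∀ s : ℝ, deriv (fun t : ℝ => l * (1 + (s+t)^2/2)) 0 = l * s := by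
      intro s
      have H2 : HasDerivAt (fun t : ℝ => l * (1 + (s+t)^2/2)) (l * s) 0 := by
        have base : HasDerivAt (fun t : ℝ => s + t) 1 0 := by
          simpa using (hasDerivAt_id (0:ℝ)).const_add s
        refine HasDerivAt.congr_deriv ((((base.pow 2).div_const 2).const_add 1).const_mul l) ?_
        push_cast
        try norm_num
        try ring
      exact H2.deriv
    simp only [inner]
    simpa using ((hasDerivAt_id (0:ℝ)).const_mul l).deriv
  have sph11 : secondPartial h 1 1 = l := by
    unfold secondPartial
    have e : ∀ s t : ℝ, h (s • (Pi.single 1 1 : Fin 3 → ℝ) + t • (Pi.single 1 1 : Fin 3 → ℝ))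
        = l * (1 + (s+t)^2/2) := by
      intro s t; rw [hh]; congr 1
      simp only [coordL]
      norm_num [Fin.ext_iff]
      try ring
    simp only [e]
    have inner : ∀ s : ℝ, deriv (fun t : ℝ => l * (1 + (s+t)^2/2)) 0 = l * s := by
      intro s
      have H2 : HasDerivAt (fun t : ℝ => l * (1 + (s+t)^2/2)) (l * s) 0 := by
        have base : HasDerivAt (fun t : ℝ => s + t) 1 0 := by
          simpa using (hasDerivAt_id (0:ℝ)).const_add s
        refine HasDerivAt.congr_deriv ((((base.pow 2).div_const 2).const_add 1).const_mul l) ?_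
        push_cast
        try norm_num
        try ring
      exact H2.deriv
    simp only [inner]
    simpa using ((hasDerivAt_id (0:ℝ)).const_mul l).deriv
  have sph01 : secondPartial h 0 1 = 0 := by
    unfold secondPartial
    have e : ∀ s t : ℝ, h (s • (Pi.single 0 1 : Fin 3 → ℝ) + t • (Pi.single 1 1 : Fin 3 → ℝ))
        = l * (1 + s^2/2 + t^2/2) := by
      intro s t; rw [hh]; congr 1
      simp only [coordL]
      norm_num [Fin.ext_iff]
      try ring
    simp only [e]
    have inner : ∀ s : ℝ, deriv (fun t : ℝ => l * (1 + s^2/2 + t^2/2)) 0 = (0:ℝ) := by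
      intro s
      have H2 : HasDerivAt (fun t : ℝ => l * (1 + s^2/2 + t^2/2)) ((0:ℝ)) 0 := by
        refine HasDerivAt.congr_deriv ((((hasDerivAt_pow 2 (0:ℝ)).div_const 2).const_add (1 + s^2/2)).const_mul l) ?_
        push_cast
        try norm_num
        try ring
      exact H2.deriv
    simp only [inner]
    simp
  have sph10 : secondPartial h 1 0 = 0 := by
    unfold secondPartial
    have e : ∀ s t : ℝ, h (s • (Pi.single 1 1 : Fin 3 → ℝ) + t • (Pi.single 0 1 : Fin 3 → ℝ))
        = l * (1 + s^2/2 + t^2/2) := by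
      intro s t; rw [hh]; congr 1
      simp only [coordL]
      norm_num [Fin.ext_iff]
      try ring
    simp only [e]
    have inner : ∀ s : ℝ, deriv (fun t : ℝ => l * (1 + s^2/2 + t^2/2)) 0 = (0:ℝ) := by
      intro s
      have H2 : HasDerivAt (fun t : ℝ => l * (1 + s^2/2 + t^2/2)) ((0:ℝ)) 0 := by
        refine HasDerivAt.congr_deriv ((((hasDerivAt_pow 2 (0:ℝ)).div_const 2).const_add (1 + s^2/2)).const_mul l) ?_
        push_cast
        try norm_num
        try ring
      exact H2.deriv
    simp only [inner]
    simp
  have sph02 : secondPartial h 0 2 = 0 := by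
    unfold secondPartial
    have e : ∀ s t : ℝ, h (s • (Pi.single 0 1 : Fin 3 → ℝ) + t • (Pi.single 2 1 : Fin 3 → ℝ))
        = l * (1/(1-t^2) + (1/(1+t))^3 * s^2/2) := by
      intro s t; rw [hh]; congr 1
      simp only [coordL]
      norm_num [Fin.ext_iff]
      try ring
    simp only [e]
    have inner : ∀ s : ℝ, deriv (fun t : ℝ => l * (1/(1-t^2) + (1/(1+t))^3 * s^2/2)) 0 = (-(3*l)/2) * s^2 := by
      intro s
      have H2 : HasDerivAt (fun t : ℝ => l * (1/(1-t^2) + (1/(1+t))^3 * s^2/2)) ((-(3*l)/2) * s^2) 0 := by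
        refine HasDerivAt.congr_deriv (((hdR' 0 (by norm_num)).add
          ((((hdP' 0 (by norm_num)).pow 3).mul_const (s^2)).div_const 2)).const_mul l) ?_
        push_cast
        try norm_num
        try ring
      exact H2.deriv
    simp only [inner]
    exact deriv_quad' _
  have sph12 : secondPartial h 1 2 = 0 := by
    unfold secondPartial
    have e : ∀ s t : ℝ, h (s • (Pi.single 1 1 : Fin 3 → ℝ) + t • (Pi.single 2 1 : Fin 3 → ℝ))
        = l * (1/(1-t^2) + (1/(1-t))^3 * s^2/2) := by
      intro s t; rw [hh]; congr 1
      simp only [coordL]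
      norm_num [Fin.ext_iff]
      try ring
    simp only [e]
    have inner : ∀ s : ℝ, deriv (fun t : ℝ => l * (1/(1-t^2) + (1/(1-t))^3 * s^2/2)) 0 = (3*l/2) * s^2 := by
      intro s
      have H2 : HasDerivAt (fun t : ℝ => l * (1/(1-t^2) + (1/(1-t))^3 * s^2/2)) ((3*l/2) * s^2) 0 := by
        refine HasDerivAt.congr_deriv (((hdR' 0 (by norm_num)).add
          ((((hdQ' 0 (by norm_num)).pow 3).mul_const (s^2)).div_const 2)).const_mul l) ?_
        push_cast
        try norm_num
        try ring
      exact H2.deriv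
    simp only [inner]
    exact deriv_quad' _
  have sph20 : secondPartial h 2 0 = 0 := by
    unfold secondPartial
    have e : ∀ s t : ℝ, h (s • (Pi.single 2 1 : Fin 3 → ℝ) + t • (Pi.single 0 1 : Fin 3 → ℝ))
        = l * (1/(1-s^2) + (1/(1+s))^3 * t^2/2) := by
      intro s t; rw [hh]; congr 1
      simp only [coordL]
      norm_num [Fin.ext_iff]
      try ring
    simp only [e]
    have inner : ∀ s : ℝ, deriv (fun t : ℝ => l * (1/(1-s^2) + (1/(1+s))^3 * t^2/2)) 0 = (0:ℝ) := by
      intro s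
      have H2 : HasDerivAt (fun t : ℝ => l * (1/(1-s^2) + (1/(1+s))^3 * t^2/2)) ((0:ℝ)) 0 := by
        refine HasDerivAt.congr_deriv (((((hasDerivAt_pow 2 (0:ℝ)).const_mul ((1/(1+s))^3)).div_const 2).const_add
          (1/(1-s^2))).const_mul l) ?_
        push_cast
        try norm_num
        try ring
      exact H2.deriv
    simp only [inner]
    simp
  have sph21 : secondPartial h 2 1 = 0 := by
    unfold secondPartial
    have e : ∀ s t : ℝ, h (s • (Pi.single 2 1 : Fin 3 → ℝ) + t • (Pi.single 1 1 : Fin 3 → ℝ))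
        = l * (1/(1-s^2) + (1/(1-s))^3 * t^2/2) := by
      intro s t; rw [hh]; congr 1
      simp only [coordL]
      norm_num [Fin.ext_iff]
      try ring
    simp only [e]
    have inner : ∀ s : ℝ, deriv (fun t : ℝ => l * (1/(1-s^2) + (1/(1-s))^3 * t^2/2)) 0 = (0:ℝ) := by
      intro s
      have H2 : HasDerivAt (fun t : ℝ => l * (1/(1-s^2) + (1/(1-s))^3 * t^2/2)) ((0:ℝ)) 0 := by
        refine HasDerivAt.congr_deriv (((((hasDerivAt_pow 2 (0:ℝ)).const_mul ((1/(1-s))^3)).div_const 2).const_add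
          (1/(1-s^2))).const_mul l) ?_
        push_cast
        try norm_num
        try ring
      exact H2.deriv
    simp only [inner]
    simp
  have sph22 : secondPartial h 2 2 = 2*l := by
    unfold secondPartial
    have e : ∀ s t : ℝ, h (s • (Pi.single 2 1 : Fin 3 → ℝ) + t • (Pi.single 2 1 : Fin 3 → ℝ))
        = l * (1/(1-(s+t)^2)) := by
      intro s t; rw [hh]; congr 1
      simp only [coordL]
      norm_num [Fin.ext_iff]
      try ring
    simp only [e]
    have inner : ∀ s ∈ Set.Ioo (-1:ℝ) 1,
        deriv (fun t : ℝ => l * (1/(1-(s+t)^2))) 0 = 2*l*s/(1-s^2)^2 := by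
      intro s hs
      have hs2 : (1:ℝ) - s^2 ≠ 0 := by nlinarith [hs.1, hs.2]
      have H2 : HasDerivAt (fun t : ℝ => l * (1/(1-(s+t)^2))) (2*l*s/(1-s^2)^2) 0 := by
        have Hc : HasDerivAt (fun c : ℝ => l * (1/(1-c^2))) (l * (2*s/(1-s^2)^2)) s :=
          (hdR' s hs2).const_mul l
        refine HasDerivAt.congr_deriv (shiftD' Hc) ?_
        ring
      exact H2.deriv
    have hev : (fun s : ℝ => deriv (fun t : ℝ => l * (1/(1-(s+t)^2))) 0)
        =ᶠ[nhds (0:ℝ)] fun s => 2*l*s/(1-s^2)^2 := by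
      filter_upwards [Ioo_mem_nhds (by norm_num : (-1:ℝ) < 0) (by norm_num : (0:ℝ) < 1)] with s hs
      exact inner s hs
    rw [hev.deriv_eq]
    have Hn : HasDerivAt (fun s : ℝ => 2*l*s) (2*l) 0 := by
      simpa using (hasDerivAt_id (0:ℝ)).const_mul (2*l)
    have Hd : HasDerivAt (fun s : ℝ => (1-s^2)^2) (2*(1-(0:ℝ)^2)^1*(-(2*(0:ℝ)^1))) 0 := by
      exact_mod_cast ((hasDerivAt_pow 2 (0:ℝ)).const_sub 1).pow 2
    have Hout : HasDerivAt (fun s : ℝ => 2*l*s/(1-s^2)^2) (2*l) 0 := by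
      refine HasDerivAt.congr_deriv (Hn.div Hd (by norm_num)) ?_
      norm_num
    exact Hout.deriv
  have spg00 : secondPartial (fun x => (g x) ^ 2) 0 0 = 0 := by
    unfold secondPartial
    have e : ∀ s t : ℝ, (g (s • (Pi.single 0 1 : Fin 3 → ℝ) + t • (Pi.single 0 1 : Fin 3 → ℝ))) ^ 2
        = l^2 * ((s+t)^4/4) := by
      intro s t; rw [hgdef]
      refine sqrt_sq_eq' l _ _ ?_ (by positivity)
      simp only [coordL]
      norm_num [Fin.ext_iff]
      try ring
    simp only [e]
    have inner : ∀ s : ℝ, deriv (fun t : ℝ => l^2 * ((s+t)^4/4)) 0 = l^2 * s^3 := by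
      intro s
      have H2 : HasDerivAt (fun t : ℝ => l^2 * ((s+t)^4/4)) (l^2 * s^3) 0 := by
        have base : HasDerivAt (fun t : ℝ => s + t) 1 0 := by
          simpa using (hasDerivAt_id (0:ℝ)).const_add s
        refine HasDerivAt.congr_deriv (((base.pow 4).div_const 4).const_mul (l^2)) ?_
        push_cast
        try norm_num
        try ring
      exact H2.deriv
    simp only [inner]
    exact deriv_cubic' _
  have spg11 : secondPartial (fun x => (g x) ^ 2) 1 1 = 0 := by
    unfold secondPartial
    have e : ∀ s t : ℝ, (g (s • (Pi.single 1 1 : Fin 3 → ℝ) + t • (Pi.single 1 1 : Fin 3 → ℝ))) ^ 2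
        = l^2 * ((s+t)^4/4) := by
      intro s t; rw [hgdef]
      refine sqrt_sq_eq' l _ _ ?_ (by positivity)
      simp only [coordL]
      norm_num [Fin.ext_iff]
      try ring
    simp only [e]
    have inner : ∀ s : ℝ, deriv (fun t : ℝ => l^2 * ((s+t)^4/4)) 0 = l^2 * s^3 := by
      intro s
      have H2 : HasDerivAt (fun t : ℝ => l^2 * ((s+t)^4/4)) (l^2 * s^3) 0 := by
        have base : HasDerivAt (fun t : ℝ => s + t) 1 0 := by
          simpa using (hasDerivAt_id (0:ℝ)).const_add s
        refine HasDerivAt.congr_deriv (((base.pow 4).div_const 4).const_mul (l^2)) ?_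
        push_cast
        try norm_num
        try ring
      exact H2.deriv
    simp only [inner]
    exact deriv_cubic' _
  have spg01 : secondPartial (fun x => (g x) ^ 2) 0 1 = 0 := by
    unfold secondPartial
    have e : ∀ s t : ℝ, (g (s • (Pi.single 0 1 : Fin 3 → ℝ) + t • (Pi.single 1 1 : Fin 3 → ℝ))) ^ 2
        = l^2 * ((t^2-s^2)^2/4 + s^2*t^2) := by
      intro s t; rw [hgdef]
      refine sqrt_sq_eq' l _ _ ?_ (by positivity)
      simp only [coordL]
      norm_num [Fin.ext_iff]
      try ring
    simp only [e]
    have inner : ∀ s : ℝ, deriv (fun t : ℝ => l^2 * ((t^2-s^2)^2/4 + s^2*t^2)) 0 = (0:ℝ) := by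
      intro s
      have H2 : HasDerivAt (fun t : ℝ => l^2 * ((t^2-s^2)^2/4 + s^2*t^2)) ((0:ℝ)) 0 := by
        refine HasDerivAt.congr_deriv ((((((hasDerivAt_pow 2 (0:ℝ)).sub_const (s^2)).pow 2).div_const 4).add
          ((hasDerivAt_pow 2 (0:ℝ)).const_mul (s^2))).const_mul (l^2)) ?_
        push_cast
        try norm_num
        try ring
      exact H2.deriv
    simp only [inner]
    simp
  have spg10 : secondPartial (fun x => (g x) ^ 2) 1 0 = 0 := by
    unfold secondPartial
    have e : ∀ s t : ℝ, (g (s • (Pi.single 1 1 : Fin 3 → ℝ) + t • (Pi.single 0 1 : Fin 3 → ℝ))) ^ 2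
        = l^2 * ((t^2-s^2)^2/4 + s^2*t^2) := by
      intro s t; rw [hgdef]
      refine sqrt_sq_eq' l _ _ ?_ (by positivity)
      simp only [coordL]
      norm_num [Fin.ext_iff]
      try ring
    simp only [e]
    have inner : ∀ s : ℝ, deriv (fun t : ℝ => l^2 * ((t^2-s^2)^2/4 + s^2*t^2)) 0 = (0:ℝ) := by
      intro s
      have H2 : HasDerivAt (fun t : ℝ => l^2 * ((t^2-s^2)^2/4 + s^2*t^2)) ((0:ℝ)) 0 := by
        refine HasDerivAt.congr_deriv ((((((hasDerivAt_pow 2 (0:ℝ)).sub_const (s^2)).pow 2).div_const 4).add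
          ((hasDerivAt_pow 2 (0:ℝ)).const_mul (s^2))).const_mul (l^2)) ?_
        push_cast
        try norm_num
        try ring
      exact H2.deriv
    simp only [inner]
    simp
  have spg02 : secondPartial (fun x => (g x) ^ 2) 0 2 = 0 := by
    unfold secondPartial
    have e : ∀ s t : ℝ, (g (s • (Pi.single 0 1 : Fin 3 → ℝ) + t • (Pi.single 2 1 : Fin 3 → ℝ))) ^ 2
        = l^2 * (1/4 * (2*((1/(1+t))*(1/(1-t))*t) - (1/(1+t))^3*s^2)^2) := by
      intro s t; rw [hgdef]
      refine sqrt_sq_eq' l _ _ ?_ (by positivity)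
      simp only [coordL]
      norm_num [Fin.ext_iff]
      try ring
    simp only [e]
    have inner : ∀ s : ℝ, deriv (fun t : ℝ => l^2 * (1/4 * (2*((1/(1+t))*(1/(1-t))*t) - (1/(1+t))^3*s^2)^2)) 0 = (-(l^2))*s^2 + (-(3*l^2)/2)*s^4 := by
      intro s
      have H2 : HasDerivAt (fun t : ℝ => l^2 * (1/4 * (2*((1/(1+t))*(1/(1-t))*t) - (1/(1+t))^3*s^2)^2)) ((-(l^2))*s^2 + (-(3*l^2)/2)*s^4) 0 := by
        have U := ((((hdP' 0 (by norm_num)).mul (hdQ' 0 (by norm_num))).mul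
          (hasDerivAt_id 0)).const_mul 2).sub (((hdP' 0 (by norm_num)).pow 3).mul_const (s^2))
        refine HasDerivAt.congr_deriv (((U.pow 2).const_mul (1/4)).const_mul (l^2)) ?_
        push_cast
        try norm_num
        try ring
      exact H2.deriv
    simp only [inner]
    exact deriv_quart' _ _
  have spg12 : secondPartial (fun x => (g x) ^ 2) 1 2 = 0 := by
    unfold secondPartial
    have e : ∀ s t : ℝ, (g (s • (Pi.single 1 1 : Fin 3 → ℝ) + t • (Pi.single 2 1 : Fin 3 → ℝ))) ^ 2
        = l^2 * (1/4 * (2*((1/(1+t))*(1/(1-t))*t) + (1/(1-t))^3*s^2)^2) := by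
      intro s t; rw [hgdef]
      refine sqrt_sq_eq' l _ _ ?_ (by positivity)
      simp only [coordL]
      norm_num [Fin.ext_iff]
      try ring
    simp only [e]
    have inner : ∀ s : ℝ, deriv (fun t : ℝ => l^2 * (1/4 * (2*((1/(1+t))*(1/(1-t))*t) + (1/(1-t))^3*s^2)^2)) 0 = (l^2)*s^2 + (3*l^2/2)*s^4 := by
      intro s
      have H2 : HasDerivAt (fun t : ℝ => l^2 * (1/4 * (2*((1/(1+t))*(1/(1-t))*t) + (1/(1-t))^3*s^2)^2)) ((l^2)*s^2 + (3*l^2/2)*s^4) 0 := by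
        have U := ((((hdP' 0 (by norm_num)).mul (hdQ' 0 (by norm_num))).mul
          (hasDerivAt_id 0)).const_mul 2).add (((hdQ' 0 (by norm_num)).pow 3).mul_const (s^2))
        refine HasDerivAt.congr_deriv (((U.pow 2).const_mul (1/4)).const_mul (l^2)) ?_
        push_cast
        try norm_num
        try ring
      exact H2.deriv
    simp only [inner]
    exact deriv_quart' _ _
  have spg20 : secondPartial (fun x => (g x) ^ 2) 2 0 = 0 := by
    unfold secondPartial
    have e : ∀ s t : ℝ, (g (s • (Pi.single 2 1 : Fin 3 → ℝ) + t • (Pi.single 0 1 : Fin 3 → ℝ))) ^ 2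
        = l^2 * (1/4 * (2*((1/(1+s))*(1/(1-s))*s) - (1/(1+s))^3*t^2)^2) := by
      intro s t; rw [hgdef]
      refine sqrt_sq_eq' l _ _ ?_ (by positivity)
      simp only [coordL]
      norm_num [Fin.ext_iff]
      try ring
    simp only [e]
    have inner : ∀ s : ℝ, deriv (fun t : ℝ => l^2 * (1/4 * (2*((1/(1+s))*(1/(1-s))*s) - (1/(1+s))^3*t^2)^2)) 0 = (0:ℝ) := by
      intro s
      have H2 : HasDerivAt (fun t : ℝ => l^2 * (1/4 * (2*((1/(1+s))*(1/(1-s))*s) - (1/(1+s))^3*t^2)^2)) ((0:ℝ)) 0 := by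
        have U := (hasDerivAt_const (0:ℝ) (2*((1/(1+s))*(1/(1-s))*s))).sub
          ((hasDerivAt_pow 2 (0:ℝ)).const_mul ((1/(1+s))^3))
        refine HasDerivAt.congr_deriv (((U.pow 2).const_mul (1/4)).const_mul (l^2)) ?_
        push_cast
        try norm_num
        try ring
      exact H2.deriv
    simp only [inner]
    simp
  have spg21 : secondPartial (fun x => (g x) ^ 2) 2 1 = 0 := by
    unfold secondPartial
    have e : ∀ s t : ℝ, (g (s • (Pi.single 2 1 : Fin 3 → ℝ) + t • (Pi.single 1 1 : Fin 3 → ℝ))) ^ 2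
        = l^2 * (1/4 * (2*((1/(1+s))*(1/(1-s))*s) + (1/(1-s))^3*t^2)^2) := by
      intro s t; rw [hgdef]
      refine sqrt_sq_eq' l _ _ ?_ (by positivity)
      simp only [coordL]
      norm_num [Fin.ext_iff]
      try ring
    simp only [e]
    have inner : ∀ s : ℝ, deriv (fun t : ℝ => l^2 * (1/4 * (2*((1/(1+s))*(1/(1-s))*s) + (1/(1-s))^3*t^2)^2)) 0 = (0:ℝ) := by
      intro s
      have H2 : HasDerivAt (fun t : ℝ => l^2 * (1/4 * (2*((1/(1+s))*(1/(1-s))*s) + (1/(1-s))^3*t^2)^2)) ((0:ℝ)) 0 := by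
        have U := (hasDerivAt_const (0:ℝ) (2*((1/(1+s))*(1/(1-s))*s))).add
          ((hasDerivAt_pow 2 (0:ℝ)).const_mul ((1/(1-s))^3))
        refine HasDerivAt.congr_deriv (((U.pow 2).const_mul (1/4)).const_mul (l^2)) ?_
        push_cast
        try norm_num
        try ring
      exact H2.deriv
    simp only [inner]
    simp
  have spg22 : secondPartial (fun x => (g x) ^ 2) 2 2 = 2*l^2 := by
    unfold secondPartial
    have e : ∀ s t : ℝ, (g (s • (Pi.single 2 1 : Fin 3 → ℝ) + t • (Pi.single 2 1 : Fin 3 → ℝ))) ^ 2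
        = l^2 * (1/4 * (2*((1/(1+(s+t)))*(1/(1-(s+t)))*(s+t)))^2) := by
      intro s t; rw [hgdef]
      refine sqrt_sq_eq' l _ _ ?_ (by positivity)
      simp only [coordL]
      norm_num [Fin.ext_iff]
      try ring
    simp only [e]
    have inner : ∀ s ∈ Set.Ioo (-1:ℝ) 1,
        deriv (fun t : ℝ => l^2 * (1/4 * (2*((1/(1+(s+t)))*(1/(1-(s+t)))*(s+t)))^2)) 0
          = l^2 * (2*s*(1+s^2)/(1-s^2)^3) := by
      intro s hs
      have h1 : (1:ℝ) + s ≠ 0 := by nlinarith [hs.1, hs.2]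
      have h2 : (1:ℝ) - s ≠ 0 := by nlinarith [hs.1, hs.2]
      have U : HasDerivAt (fun c : ℝ => 2*((1/(1+c))*(1/(1-c))*c))
          (2*(((-(1/(1+s)^2))*(1/(1-s)) + (1/(1+s))*(1/(1-s)^2))*s + (1/(1+s))*(1/(1-s))*1)) s :=
        (((hdP' s h1).mul (hdQ' s h2)).mul (hasDerivAt_id s)).const_mul 2
      have Hc : HasDerivAt (fun c : ℝ => l^2 * (1/4 * (2*((1/(1+c))*(1/(1-c))*c))^2))
          (l^2 * (2*s*(1+s^2)/(1-s^2)^3)) s := by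
        have h3 : (1:ℝ) - s^2 ≠ 0 := by nlinarith [hs.1, hs.2]
        refine HasDerivAt.congr_deriv (((U.pow 2).const_mul (1/4)).const_mul (l^2)) ?_
        push_cast
        field_simp [h1, h2, h3]
        ring
      have H2 : HasDerivAt
          (fun t : ℝ => l^2 * (1/4 * (2*((1/(1+(s+t)))*(1/(1-(s+t)))*(s+t)))^2))
          (l^2 * (2*s*(1+s^2)/(1-s^2)^3)) 0 := shiftD' Hc
      exact H2.deriv
    have hev : (fun s : ℝ => deriv
          (fun t : ℝ => l^2 * (1/4 * (2*((1/(1+(s+t)))*(1/(1-(s+t)))*(s+t)))^2)) 0)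
        =ᶠ[nhds (0:ℝ)] fun s => l^2 * (2*s*(1+s^2)/(1-s^2)^3) := by
      filter_upwards [Ioo_mem_nhds (by norm_num : (-1:ℝ) < 0) (by norm_num : (0:ℝ) < 1)] with s hs
      exact inner s hs
    rw [hev.deriv_eq]
    have Hn : HasDerivAt (fun s : ℝ => 2*s*(1+s^2))
        ((2*1)*(1+(0:ℝ)^2) + (2*(0:ℝ))*(2*(0:ℝ)^1)) 0 := by
      have ha : HasDerivAt (fun s : ℝ => 2*s) (2*1) 0 := by
        simpa using ((hasDerivAt_id (0:ℝ)).const_mul 2)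
      have hb : HasDerivAt (fun s : ℝ => 1+s^2) (2*(0:ℝ)^1) 0 := by
        exact_mod_cast (hasDerivAt_pow 2 (0:ℝ)).const_add 1
      exact_mod_cast ha.mul hb
    have Hd : HasDerivAt (fun s : ℝ => (1-s^2)^3) (3*(1-(0:ℝ)^2)^2*(-(2*(0:ℝ)^1))) 0 := by
      exact_mod_cast ((hasDerivAt_pow 2 (0:ℝ)).const_sub 1).pow 3
    have Hout : HasDerivAt (fun s : ℝ => l^2 * (2*s*(1+s^2)/(1-s^2)^3)) (2*l^2) 0 := by
      refine HasDerivAt.congr_deriv (((Hn.div Hd (by norm_num)).const_mul (l^2))) ?_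
      norm_num
      try ring
    exact Hout.deriv
  have hmat : (Matrix.of fun i j : Fin 3 =>
        2 * deriv Real.arctan (h 0) * secondPartial h i j +
          deriv (deriv Real.arctan) (h 0) * secondPartial (fun x => (g x) ^ 2) i j) =
      Matrix.diagonal
        ![2 * l / (1 + l ^ 2), 2 * l / (1 + l ^ 2),
          4 * l / (1 + l ^ 2) - 4 * l ^ 3 / (1 + l ^ 2) ^ 2] := by
    have hl2' : (1:ℝ) + l^2 ≠ 0 := ne_of_gt hl2
    ext i j
    fin_cases i <;> fin_cases j <;>
      simp only [Fin.zero_eta, Fin.mk_one, Fin.reduceFinMk, Matrix.of_apply, hda, hdda,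
        sph00, sph01, sph02, sph10, sph11, sph12, sph20, sph21, sph22,
        spg00, spg01, spg02, spg10, spg11, spg12, spg20, spg21, spg22] <;>
      simp [Matrix.diagonal] <;>
      field_simp <;> ring
  refine ⟨hmat, ?_⟩
  rw [hmat, Matrix.posDef_diagonal_iff]
  intro i
  fin_cases i <;>
    simp only [Fin.zero_eta, Fin.mk_one, Fin.reduceFinMk, Matrix.cons_val_zero,
      Matrix.cons_val_one, Matrix.head_cons, Matrix.cons_val_two, Matrix.tail_cons]
  · positivity
  · positivity
  · have heq : 4 * l / (1 + l ^ 2) - 4 * l ^ 3 / (1 + l ^ 2) ^ 2 = 4 * l / (1 + l^2)^2 := by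
      field_simp; ring
    rw [heq]; positivity
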